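/- arXiv:0904.2752 — 2 statements merged into one kernel-verified Lean document; each statement's English description precedes it below -/
import Mathlib

section
/- Let B : Ω × [0,∞) × Γ → ℝ be a regular field on Γ, i.e. (a) B is ℱ⊗𝔅([0,∞))⊗𝔅(Γ)-measurable, (b) for each x ∈ Γ there is an event Ω_x with P(Ω_x)=1 such that for every ω ∈ Ω_x the path t ↦ B_t(ω,x) is continuous on [0,∞), and (c) for each t ∈ [0,∞) and x ∈ Γ the random variable ω ↦ B_t(ω,x) is ℱ_t-measurable. Then there exists a field A : Ω × [0,∞) × Γ → ℝ satisfying (a) and (c) such that for EVERY ω ∈ Ω and x ∈ Γ the path t ↦ A_t(ω,x) is continuous on [0,∞), and such that for each x ∈ Γ, with probability one A_t(x) = B_t(x) for all t ∈ [0,∞). -/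
open MeasureTheory Filter Topology
open scoped NNReal ENNReal Classical

namespace RegularFieldAux

/-- dyadic rational `i / 2^j` as an element of `ℝ≥0`. -/
noncomputable def dy (i j : ℕ) : ℝ≥0 := (i : ℝ≥0) / 2 ^ j

/-- the largest dyadic rational of generation `n` below `t`. -/
noncomputable def qd (n : ℕ) (t : ℝ≥0) : ℝ≥0 := dy ⌊(t : ℝ) * 2 ^ n⌋₊ n

lemma qd_coe (n : ℕ) (t : ℝ≥0) :
    ((qd n t : ℝ≥0) : ℝ) = (⌊(t : ℝ) * 2 ^ n⌋₊ : ℝ) / 2 ^ n := by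
  simp [qd, dy, NNReal.coe_div]

lemma qd_le (n : ℕ) (t : ℝ≥0) : qd n t ≤ t := by
  rw [← NNReal.coe_le_coe, qd_coe, div_le_iff₀ (by positivity)]
  exact Nat.floor_le (by positivity)

lemma lt_qd_add (n : ℕ) (t : ℝ≥0) : (t : ℝ) < (qd n t : ℝ) + ((2 : ℝ) ^ n)⁻¹ := by
  rw [qd_coe]
  have h := Nat.lt_floor_add_one ((t : ℝ) * 2 ^ n)
  have h2 : (0:ℝ) < 2 ^ n := by positivity
  rw [div_add' _ _ _ (ne_of_gt h2)]
  rw [lt_div_iff₀ h2]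
  calc (t:ℝ) * 2 ^ n < ⌊(t : ℝ) * 2 ^ n⌋₊ + 1 := h
  _ = (⌊(t : ℝ) * 2 ^ n⌋₊ : ℝ) + 2 ^ n * (2 ^ n)⁻¹ := by
        rw [mul_inv_cancel₀ (ne_of_gt h2)]
  _ = (⌊(t : ℝ) * 2 ^ n⌋₊ : ℝ) + (2 ^ n)⁻¹ * 2 ^ n := by ring

lemma dist_qd_le (n : ℕ) (t : ℝ≥0) : dist (qd n t) t ≤ ((2 : ℝ) ^ n)⁻¹ := by
  rw [NNReal.dist_eq, abs_sub_comm, abs_of_nonneg (by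
    simpa using (NNReal.coe_le_coe.2 (qd_le n t)))]
  linarith [lt_qd_add n t]

lemma measurable_qd (n : ℕ) : Measurable (qd n) := by
  have h1 : Measurable fun t : ℝ≥0 => ⌊(t : ℝ) * 2 ^ n⌋₊ :=
    Nat.measurable_floor.comp (measurable_coe_nnreal_real.mul_const _)
  exact (measurable_from_top (f := fun k : ℕ => ((k : ℝ≥0) / 2 ^ n))).comp h1

lemma tendsto_qd (t : ℝ≥0) : Tendsto (fun n => qd n t) atTop (𝓝 t) := by
  have h0 : Tendsto (fun n : ℕ => ((2 : ℝ) ^ n)⁻¹) atTop (𝓝 0) :=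
    tendsto_inv_atTop_zero.comp (tendsto_pow_atTop_atTop_of_one_lt one_lt_two)
  rw [tendsto_iff_dist_tendsto_zero]
  exact squeeze_zero (fun n => dist_nonneg) (fun n => dist_qd_le n t) h0

/-- Uniform continuity property on dyadic rationals, expressed with countable data. -/
def UCfun (f : ℝ≥0 → ℝ) : Prop :=
  ∀ N k : ℕ, ∃ m : ℕ, ∀ i₁ j₁ i₂ j₂ : ℕ,
    dy i₁ j₁ ≤ (N : ℝ≥0) → dy i₂ j₂ ≤ (N : ℝ≥0) →
    dist (dy i₁ j₁) (dy i₂ j₂) ≤ ((m : ℝ) + 1)⁻¹ →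
    dist (f (dy i₁ j₁)) (f (dy i₂ j₂)) ≤ ((k : ℝ) + 1)⁻¹

lemma ucfun_of_continuous {f : ℝ≥0 → ℝ} (hf : Continuous f) : UCfun f := by
  intro N k
  have huc : UniformContinuousOn f (Set.Icc 0 (N : ℝ≥0)) :=
    isCompact_Icc.uniformContinuousOn_of_continuous hf.continuousOn
  rw [Metric.uniformContinuousOn_iff] at huc
  obtain ⟨δ, hδ, h⟩ := huc (((k : ℝ) + 1)⁻¹) (by positivity)
  obtain ⟨m, hm⟩ := exists_nat_one_div_lt hδ
  refine ⟨m, fun i₁ j₁ i₂ j₂ h₁ h₂ hd => ?_⟩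
  have := h _ ⟨zero_le, h₁⟩ _ ⟨zero_le, h₂⟩
    (lt_of_le_of_lt hd (by rw [← one_div]; exact hm))
  exact this.le

lemma exists_pow_inv_lt {c : ℝ} (hc : 0 < c) : ∃ n₀ : ℕ, ((2 : ℝ) ^ n₀)⁻¹ < c := by
  obtain ⟨n₀, hn₀⟩ := exists_pow_lt_of_lt_one hc (by norm_num : (2 : ℝ)⁻¹ < 1)
  exact ⟨n₀, by rwa [inv_pow] at hn₀⟩

lemma pow_inv_anti {a b : ℕ} (hab : a ≤ b) : ((2:ℝ) ^ b)⁻¹ ≤ ((2:ℝ) ^ a)⁻¹ := by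
  gcongr <;> norm_num

lemma exists_lim {f : ℝ≥0 → ℝ} (h : UCfun f) (t : ℝ≥0) :
    ∃ L, Tendsto (fun n => f (qd n t)) atTop (𝓝 L) := by
  apply cauchySeq_tendsto_of_complete
  rw [Metric.cauchySeq_iff]
  intro ε hε
  obtain ⟨k, hk⟩ := exists_nat_one_div_lt hε
  rw [one_div] at hk
  set N := ⌈(t : ℝ)⌉₊ with hN
  obtain ⟨m, hm⟩ := h N k
  obtain ⟨n₀, hn₀⟩ := exists_pow_inv_lt (show (0:ℝ) < ((m:ℝ)+1)⁻¹/2 by positivity)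
  refine ⟨n₀, fun a ha b hb => ?_⟩
  have htN : t ≤ (N : ℝ≥0) := by
    rw [← NNReal.coe_le_coe]
    exact_mod_cast Nat.le_ceil (t : ℝ)
  have hda : dist (qd a t) (qd b t) ≤ ((m:ℝ)+1)⁻¹ := by
    calc dist (qd a t) (qd b t) ≤ dist (qd a t) t + dist t (qd b t) := dist_triangle _ _ _
    _ ≤ ((2:ℝ) ^ a)⁻¹ + ((2:ℝ) ^ b)⁻¹ := by
        rw [dist_comm t]
        exact add_le_add (dist_qd_le a t) (dist_qd_le b t)
    _ ≤ ((2:ℝ) ^ n₀)⁻¹ + ((2:ℝ) ^ n₀)⁻¹ := add_le_add (pow_inv_anti ha) (pow_inv_anti hb)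
    _ ≤ ((m:ℝ)+1)⁻¹/2 + ((m:ℝ)+1)⁻¹/2 := add_le_add hn₀.le hn₀.le
    _ = ((m:ℝ)+1)⁻¹ := by ring
  calc dist (f (qd a t)) (f (qd b t)) ≤ ((k:ℝ)+1)⁻¹ :=
        hm _ a _ b ((qd_le a t).trans htN) ((qd_le b t).trans htN) hda
  _ < ε := hk

/-- The everywhere-defined continuous version. -/
noncomputable def ext (f : ℝ≥0 → ℝ) (t : ℝ≥0) : ℝ :=
  limUnder atTop fun n => f (qd n t)

lemma tendsto_ext {f : ℝ≥0 → ℝ} (h : UCfun f) (t : ℝ≥0) :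
    Tendsto (fun n => f (qd n t)) atTop (𝓝 (ext f t)) :=
  tendsto_nhds_limUnder (exists_lim h t)

lemma ext_eq_of_continuous {f : ℝ≥0 → ℝ} (hf : Continuous f) (t : ℝ≥0) :
    ext f t = f t :=
  Filter.Tendsto.limUnder_eq ((hf.tendsto t).comp (tendsto_qd t))

lemma continuous_ext {f : ℝ≥0 → ℝ} (h : UCfun f) : Continuous (ext f) := by
  rw [Metric.continuous_iff]
  intro t₀ ε hε
  obtain ⟨k, hk⟩ := exists_nat_one_div_lt hε
  rw [one_div] at hk
  set N := ⌈(t₀ : ℝ)⌉₊ + 1 with hN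
  obtain ⟨m, hm⟩ := h N k
  refine ⟨min 1 (((m:ℝ)+1)⁻¹/2), by positivity, fun t ht => ?_⟩
  have ht1 : dist t t₀ < 1 := lt_of_lt_of_le ht (min_le_left _ _)
  have ht2 : dist t t₀ < ((m:ℝ)+1)⁻¹/2 := lt_of_lt_of_le ht (min_le_right _ _)
  have htN : t ≤ (N : ℝ≥0) := by
    rw [← NNReal.coe_le_coe]
    have h1 : (t:ℝ) - (t₀:ℝ) < 1 := by
      have := abs_lt.1 (show |(t:ℝ) - (t₀:ℝ)| < 1 from by rwa [NNReal.dist_eq] at ht1)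
      linarith [this.2]
    have h2 : (t₀:ℝ) ≤ ⌈(t₀:ℝ)⌉₊ := Nat.le_ceil _
    have h3 : ((N : ℝ≥0) : ℝ) = (⌈(t₀:ℝ)⌉₊ : ℝ) + 1 := by push_cast [hN]; ring
    linarith
  have ht₀N : t₀ ≤ (N : ℝ≥0) := by
    rw [← NNReal.coe_le_coe]
    have h2 : (t₀:ℝ) ≤ ⌈(t₀:ℝ)⌉₊ := Nat.le_ceil _
    have h3 : ((N : ℝ≥0) : ℝ) = (⌈(t₀:ℝ)⌉₊ : ℝ) + 1 := by push_cast [hN]; ring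
    linarith
  obtain ⟨n₁, hn₁⟩ := exists_pow_inv_lt (show (0:ℝ) < ((m:ℝ)+1)⁻¹/4 by positivity)
  have key : ∀ᶠ n in atTop, dist (f (qd n t)) (f (qd n t₀)) ≤ ((k:ℝ)+1)⁻¹ := by
    filter_upwards [eventually_ge_atTop n₁] with n hn
    have hd : dist (qd n t) (qd n t₀) ≤ ((m:ℝ)+1)⁻¹ := by
      calc dist (qd n t) (qd n t₀)
          ≤ dist (qd n t) t + dist t t₀ + dist t₀ (qd n t₀) := dist_triangle4 _ _ _ _
        _ ≤ ((2:ℝ) ^ n)⁻¹ + ((m:ℝ)+1)⁻¹/2 + ((2:ℝ) ^ n)⁻¹ := by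
            rw [dist_comm t₀]
            exact add_le_add (add_le_add (dist_qd_le n t) ht2.le) (dist_qd_le n t₀)
        _ ≤ ((m:ℝ)+1)⁻¹/4 + ((m:ℝ)+1)⁻¹/2 + ((m:ℝ)+1)⁻¹/4 :=
            add_le_add (add_le_add ((pow_inv_anti hn).trans hn₁.le) le_rfl)
              ((pow_inv_anti hn).trans hn₁.le)
        _ = ((m:ℝ)+1)⁻¹ := by ring
    exact hm _ n _ n ((qd_le n t).trans htN) ((qd_le n t₀).trans ht₀N) hd
  have hten : Tendsto (fun n => dist (f (qd n t)) (f (qd n t₀))) atTop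
      (𝓝 (dist (ext f t) (ext f t₀))) := (tendsto_ext h t).dist (tendsto_ext h t₀)
  exact lt_of_le_of_lt (le_of_tendsto hten key) hk

end RegularFieldAux
/-- Lemma 4.12.1 of the paper.
If `B` is a regular field on `Γ` (jointly measurable, `ℱ_t`-measurable at each time and
space point, and with, for each `x ∈ Γ`, almost surely continuous paths), then there is a
field `A` with the same measurability properties whose paths are continuous for *every*
`ω` and `x ∈ Γ`, and which is, for each `x ∈ Γ`, almost surely a modification of `B`
(indistinguishable from it). -/
theorem regular_field_has_strongly_regular_modification
    {Ω : Type*} {m0 : MeasurableSpace Ω} (P : Measure Ω) [IsProbabilityMeasure P]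
    (F : Filtration ℝ≥0 m0)
    -- completeness of the filtration with respect to `(ℱ, P)`
    (hcomplete : ∀ (t : ℝ≥0) (s : Set Ω), MeasurableSet s → P s = 0 →
      MeasurableSet[F t] s)
    {d : ℕ} (Γ : Set (EuclideanSpace ℝ (Fin d))) (hΓ : MeasurableSet Γ)
    (B : Ω → ℝ≥0 → EuclideanSpace ℝ (Fin d) → ℝ)
    -- (a) joint measurability with respect to `ℱ ⊗ 𝔅([0,∞)) ⊗ 𝔅(Γ)`
    (ha : Measurable fun p : Ω × ℝ≥0 × Γ => B p.1 p.2.1 (p.2.2 : EuclideanSpace ℝ (Fin d)))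
    -- (b) for each `x ∈ Γ`, almost surely continuous paths
    (hb : ∀ x ∈ Γ, ∀ᵐ ω ∂P, Continuous fun t => B ω t x)
    -- (c) adaptedness at each time and space point
    (hc : ∀ (t : ℝ≥0), ∀ x ∈ Γ, @Measurable Ω ℝ (F t) _ fun ω => B ω t x) :
    ∃ A : Ω → ℝ≥0 → EuclideanSpace ℝ (Fin d) → ℝ,
      (Measurable fun p : Ω × ℝ≥0 × Γ => A p.1 p.2.1 (p.2.2 : EuclideanSpace ℝ (Fin d))) ∧
      (∀ (t : ℝ≥0), ∀ x ∈ Γ, @Measurable Ω ℝ (F t) _ fun ω => A ω t x) ∧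
      (∀ ω, ∀ x ∈ Γ, Continuous fun t => A ω t x) ∧
      (∀ x ∈ Γ, ∀ᵐ ω ∂P, ∀ t : ℝ≥0, A ω t x = B ω t x) := by
  classical
  open RegularFieldAux in
  -- the modified field
  set A : Ω → ℝ≥0 → EuclideanSpace ℝ (Fin d) → ℝ := fun ω t x =>
    if UCfun (fun s => B ω s x) then ext (fun s => B ω s x) t else 0 with hA
  -- basic measurability of slices of `B`
  have hBslice : ∀ s : ℝ≥0, Measurable fun p : Ω × Γ => B p.1 s (p.2 : EuclideanSpace ℝ (Fin d)) := by
    intro s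
    have hmap : Measurable fun p : Ω × Γ => (p.1, (s, p.2)) :=
      measurable_fst.prodMk (measurable_const.prodMk measurable_snd)
    exact ha.comp hmap
  -- the set where the dyadic uniform continuity property holds is measurable
  have hUCset : MeasurableSet {p : Ω × Γ | UCfun fun s => B p.1 s (p.2 : EuclideanSpace ℝ (Fin d))} := by
    have himp : ∀ (c : Prop) (S : Set (Ω × Γ)), MeasurableSet S →
        MeasurableSet {p | c → p ∈ S} := by
      intro c S hS
      by_cases hcp : c
      · simpa [hcp] using hS
      · simp [hcp]
    have hbasic : ∀ (s t : ℝ≥0) (c : ℝ), MeasurableSet {p : Ω × Γ |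
        dist (B p.1 s (p.2 : EuclideanSpace ℝ (Fin d)))
          (B p.1 t (p.2 : EuclideanSpace ℝ (Fin d))) ≤ c} :=
      fun s t c => measurableSet_le ((hBslice s).dist (hBslice t)) measurable_const
    have heq : {p : Ω × Γ | UCfun fun s => B p.1 s (p.2 : EuclideanSpace ℝ (Fin d))} =
        ⋂ N : ℕ, ⋂ k : ℕ, ⋃ m : ℕ, ⋂ i₁ : ℕ, ⋂ j₁ : ℕ, ⋂ i₂ : ℕ, ⋂ j₂ : ℕ,
          {p : Ω × Γ | dy i₁ j₁ ≤ (N : ℝ≥0) → dy i₂ j₂ ≤ (N : ℝ≥0) →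
            dist (dy i₁ j₁) (dy i₂ j₂) ≤ ((m : ℝ) + 1)⁻¹ →
            p ∈ {p : Ω × Γ | dist (B p.1 (dy i₁ j₁) (p.2 : EuclideanSpace ℝ (Fin d)))
              (B p.1 (dy i₂ j₂) (p.2 : EuclideanSpace ℝ (Fin d))) ≤ ((k : ℝ) + 1)⁻¹}} := by
      ext p
      simp only [Set.mem_setOf_eq, Set.mem_iInter, Set.mem_iUnion, UCfun]
    rw [heq]
    refine MeasurableSet.iInter fun N => MeasurableSet.iInter fun k =>
      MeasurableSet.iUnion fun m => MeasurableSet.iInter fun i₁ => MeasurableSet.iInter fun j₁ =>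
      MeasurableSet.iInter fun i₂ => MeasurableSet.iInter fun j₂ => ?_
    have h1 := hbasic (dy i₁ j₁) (dy i₂ j₂) (((k : ℝ) + 1)⁻¹)
    exact himp _ _ (himp _ _ (himp _ _ h1))
  -- the approximating sequence converges everywhere to `A`
  have htendA : ∀ (ω : Ω) (t : ℝ≥0) (x : EuclideanSpace ℝ (Fin d)),
      Tendsto (fun n => if UCfun (fun s => B ω s x) then B ω (qd n t) x else 0) atTop
        (𝓝 (A ω t x)) := by
    intro ω t x
    by_cases h : UCfun fun s => B ω s x
    · simpa [hA, h] using tendsto_ext h t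
    · simpa [hA, h, ext] using (tendsto_const_nhds : Tendsto (fun _ : ℕ => (0:ℝ)) atTop (𝓝 0))
  refine ⟨A, ?_, ?_, ?_, ?_⟩
  · -- (a) joint measurability
    have hn : ∀ n : ℕ, Measurable fun p : Ω × ℝ≥0 × Γ =>
        if UCfun (fun s => B p.1 s (p.2.2 : EuclideanSpace ℝ (Fin d)))
          then B p.1 (qd n p.2.1) (p.2.2 : EuclideanSpace ℝ (Fin d)) else 0 := by
      intro n
      have hset : MeasurableSet {p : Ω × ℝ≥0 × Γ |
          UCfun fun s => B p.1 s (p.2.2 : EuclideanSpace ℝ (Fin d))} := by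
        have hproj : Measurable fun p : Ω × ℝ≥0 × Γ => (p.1, p.2.2) :=
          measurable_fst.prodMk (measurable_snd.comp measurable_snd)
        exact hproj hUCset
      have hval : Measurable fun p : Ω × ℝ≥0 × Γ =>
          B p.1 (qd n p.2.1) (p.2.2 : EuclideanSpace ℝ (Fin d)) := by
        have hmap : Measurable fun p : Ω × ℝ≥0 × Γ => (p.1, (qd n p.2.1, p.2.2)) :=
          measurable_fst.prodMk
            (((measurable_qd n).comp (measurable_fst.comp measurable_snd)).prodMk
              (measurable_snd.comp measurable_snd))
        exact ha.comp hmap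
      exact Measurable.ite hset hval measurable_const
    refine measurable_of_tendsto_metrizable hn (tendsto_pi_nhds.mpr fun p => ?_)
    exact htendA p.1 p.2.1 p.2.2
  · -- (c) adaptedness
    intro t x hx
    -- the section of the UC set at `x` belongs to `F t`
    have hsec : MeasurableSet {ω | UCfun fun s => B ω s x} := by
      have hmap : Measurable fun ω : Ω => ((ω, ⟨x, hx⟩) : Ω × Γ) :=
        measurable_id.prodMk measurable_const
      exact hmap hUCset
    have hnull : P {ω | UCfun fun s => B ω s x}ᶜ = 0 := by
      refine measure_mono_null ?_ (ae_iff.mp (hb x hx))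
      intro ω hω
      exact fun hcont => hω (ucfun_of_continuous hcont)
    have hFsec : MeasurableSet[F t] {ω | UCfun fun s => B ω s x} := by
      have := (hcomplete t _ hsec.compl hnull).compl
      simpa using this
    have hn : ∀ n : ℕ, @Measurable Ω ℝ (F t) _ fun ω =>
        if UCfun (fun s => B ω s x) then B ω (qd n t) x else 0 := by
      intro n
      have hBn : @Measurable Ω ℝ (F t) _ fun ω => B ω (qd n t) x :=
        (hc (qd n t) x hx).mono (F.mono (qd_le n t)) le_rfl
      exact Measurable.ite hFsec hBn measurable_const
    exact @measurable_of_tendsto_metrizable Ω ℝ (F t) _ _ _ _ _ _ hn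
      (tendsto_pi_nhds.mpr fun ω => htendA ω t x)
  · -- continuity of all paths
    intro ω x hx
    by_cases h : UCfun fun s => B ω s x
    · simpa [hA, h] using continuous_ext h
    · simpa [hA, h] using continuous_const
  · -- a.s. modification at each point
    intro x hx
    filter_upwards [hb x hx] with ω hcont t
    have h : UCfun fun s => B ω s x := ucfun_of_continuous hcont
    simp only [hA, if_pos h]
    exact ext_eq_of_continuous hcont t
end

section
/- Let X and C be [0,∞]-valued random variables on a probability space (Ω,ℱ,P) and let N > 0 be a constant such that for all ε, δ > 0 one has P(X ≥ δ) ≤ P(C ≥ ε) + (N/δ)·E[min(ε, C)]. Then for every q ∈ (0,1) there is a constant N′ depending only on N and q (one may take N′ = 1 + N/(1−q)) such that E[X^q] ≤ N′·E[C^q]. -/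
open MeasureTheory
open scoped NNReal ENNReal

open Set


lemma layercake_ennreal {Ω : Type*} {m0 : MeasurableSpace Ω} (μ : Measure Ω) [SFinite μ]
    (g : Ω → ℝ≥0∞) (hg : Measurable g) :
    ∫⁻ ω, g ω ∂μ = ∫⁻ t in Ioi (0:ℝ), μ {ω | ENNReal.ofReal t < g ω} := by
  symm
  have hmble : Measurable (Function.uncurry fun t ω => ({ω | ENNReal.ofReal t < g ω}).indicator (fun _ => (1:ℝ≥0∞)) ω) := by
    have hs : MeasurableSet {p : ℝ × Ω | ENNReal.ofReal p.1 < g p.2} :=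
      measurableSet_lt (ENNReal.measurable_ofReal.comp measurable_fst) (hg.comp measurable_snd)
    have : (Function.uncurry fun t ω => ({ω | ENNReal.ofReal t < g ω}).indicator (fun _ => (1:ℝ≥0∞)) ω)
        = ({p : ℝ × Ω | ENNReal.ofReal p.1 < g p.2}).indicator (fun _ => (1:ℝ≥0∞)) := by
      ext ⟨t, ω⟩
      by_cases h : ENNReal.ofReal t < g ω <;>
        simp [Function.uncurry, Set.indicator, h]
    rw [this]
    exact measurable_const.indicator hs
  calc ∫⁻ t in Ioi (0:ℝ), μ {ω | ENNReal.ofReal t < g ω}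
      = ∫⁻ t in Ioi (0:ℝ), ∫⁻ ω, ({ω | ENNReal.ofReal t < g ω}).indicator (fun _ => (1:ℝ≥0∞)) ω ∂μ := by
        refine lintegral_congr fun t => ?_
        rw [lintegral_indicator (measurableSet_lt measurable_const hg)]
        simp
    _ = ∫⁻ ω, (∫⁻ t in Ioi (0:ℝ), ({ω | ENNReal.ofReal t < g ω}).indicator (fun _ => (1:ℝ≥0∞)) ω) ∂μ := by
        exact lintegral_lintegral_swap hmble.aemeasurable
    _ = ∫⁻ ω, g ω ∂μ := by
        refine lintegral_congr fun ω => ?_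
        have h1 : ∀ t : ℝ, ({ω' | ENNReal.ofReal t < g ω'}).indicator (fun _ => (1:ℝ≥0∞)) ω
            = ({t' : ℝ | ENNReal.ofReal t' < g ω}).indicator (fun _ => (1:ℝ≥0∞)) t := by
          intro t; by_cases h : ENNReal.ofReal t < g ω <;> simp [Set.indicator, h]
        simp_rw [h1]
        rw [lintegral_indicator (measurableSet_lt (ENNReal.measurable_ofReal) measurable_const)]
        rw [setLIntegral_one, Measure.restrict_apply (measurableSet_lt (ENNReal.measurable_ofReal) measurable_const)]
        rcases eq_or_ne (g ω) ∞ with hgw | hgw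
        · have : {t' : ℝ | ENNReal.ofReal t' < g ω} ∩ Ioi 0 = Ioi 0 := by
            apply inter_eq_right.mpr
            intro t ht; simp [hgw]
          rw [this, hgw]; simp
        · have : {t' : ℝ | ENNReal.ofReal t' < g ω} ∩ Ioi 0 = Ioo 0 (g ω).toReal := by
            ext t
            simp only [mem_inter_iff, mem_setOf_eq, mem_Ioi, mem_Ioo]
            constructor
            · rintro ⟨h1, h2⟩
              exact ⟨h2, (ENNReal.ofReal_lt_iff_lt_toReal h2.le hgw).mp h1⟩
            · rintro ⟨h1, h2⟩
              exact ⟨(ENNReal.ofReal_lt_iff_lt_toReal h1.le hgw).mpr h2, h1⟩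
          rw [this, Real.volume_Ioo, sub_zero, ENNReal.ofReal_toReal hgw]


lemma inner_bound {q : ℝ} (hq0 : 0 < q) (hq1 : q < 1) (u : ℝ≥0∞) :
    ∫⁻ t in Ioi (0:ℝ), (ENNReal.ofReal (t ^ (1/q)))⁻¹ * min (ENNReal.ofReal (t ^ (1/q))) u
      ≤ (ENNReal.ofReal (1-q))⁻¹ * u ^ q := by
  have h1q : (0:ℝ) < 1 - q := by linarith
  rcases eq_or_ne u ∞ with hu | hu
  · have : (ENNReal.ofReal (1-q))⁻¹ * u ^ q = ∞ := by
      rw [hu, ENNReal.top_rpow_of_pos hq0, ENNReal.mul_top]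
      simp [ENNReal.ofReal_ne_top]
    rw [this]; exact le_top
  rcases eq_or_ne u 0 with hu0 | hu0
  · simp [hu0]
  have hur : 0 < u.toReal := ENNReal.toReal_pos hu0 hu
  set a : ℝ := u.toReal ^ q with ha
  have ha0 : 0 < a := Real.rpow_pos_of_pos hur q
  have hsplit : (Ioi (0:ℝ)) = Ioc 0 a ∪ Ioi a := (Ioc_union_Ioi_eq_Ioi ha0.le).symm
  rw [hsplit, lintegral_union measurableSet_Ioi Ioc_disjoint_Ioi_same]
  have huq : u ^ q ≠ ∞ := (ENNReal.rpow_lt_top_of_nonneg hq0.le hu).ne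
  have hofa : ENNReal.ofReal a = u ^ q := by
    rw [ha, ← ENNReal.ofReal_rpow_of_pos hur, ENNReal.ofReal_toReal hu]
  have term1 : ∫⁻ t in Ioc (0:ℝ) a, (ENNReal.ofReal (t ^ (1/q)))⁻¹ * min (ENNReal.ofReal (t ^ (1/q))) u
      ≤ u ^ q := by
    calc ∫⁻ t in Ioc (0:ℝ) a, (ENNReal.ofReal (t ^ (1/q)))⁻¹ * min (ENNReal.ofReal (t ^ (1/q))) u
        ≤ ∫⁻ _ in Ioc (0:ℝ) a, (1:ℝ≥0∞) := by
          refine setLIntegral_mono' measurableSet_Ioc fun t _ => ?_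
          exact le_trans (mul_le_mul_right (min_le_left _ _) _) (ENNReal.inv_mul_le_one _)
      _ = ENNReal.ofReal a := by
          rw [setLIntegral_one, Real.volume_Ioc, sub_zero]
      _ = u ^ q := hofa
  have r1 : -(1/q) < -1 := by
    rw [neg_lt_neg_iff]
    rw [lt_div_iff₀ hq0]; linarith
  have term2 : ∫⁻ t in Ioi a, (ENNReal.ofReal (t ^ (1/q)))⁻¹ * min (ENNReal.ofReal (t ^ (1/q))) u
      ≤ u ^ q * ENNReal.ofReal (q / (1-q)) := by
    calc ∫⁻ t in Ioi a, (ENNReal.ofReal (t ^ (1/q)))⁻¹ * min (ENNReal.ofReal (t ^ (1/q))) u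
        ≤ ∫⁻ t in Ioi a, u * ENNReal.ofReal (t ^ (-(1/q))) := by
          refine setLIntegral_mono' measurableSet_Ioi fun t ht => ?_
          have ht0 : (0:ℝ) < t := lt_trans ha0 ht
          have hrp : (0:ℝ) < t ^ (1/q) := Real.rpow_pos_of_pos ht0 _
          have : (ENNReal.ofReal (t ^ (1/q)))⁻¹ = ENNReal.ofReal (t ^ (-(1/q))) := by
            rw [Real.rpow_neg ht0.le, ENNReal.ofReal_inv_of_pos hrp]
          rw [this, mul_comm]
          exact mul_le_mul_left (min_le_right _ _) _
      _ = u * ∫⁻ t in Ioi a, ENNReal.ofReal (t ^ (-(1/q))) := by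
          rw [lintegral_const_mul' _ _ hu]
      _ = u * ENNReal.ofReal (∫ t in Ioi a, t ^ (-(1/q))) := by
          rw [ofReal_integral_eq_lintegral_ofReal (integrableOn_Ioi_rpow_of_lt r1 ha0)]
          filter_upwards [ae_restrict_mem measurableSet_Ioi] with t ht
          exact Real.rpow_nonneg (le_of_lt (lt_trans ha0 ht)) _
      _ = u * ENNReal.ofReal (a ^ (-(1/q) + 1) * (q / (1-q))) := by
          have hq' : q ≠ 0 := hq0.ne'
          have he : -(1/q) + 1 = -((1-q)/q) := by field_simp; ring
          rw [integral_Ioi_rpow_of_lt r1 ha0, he]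
          congr 1
          rw [div_neg, neg_div, neg_neg, div_div_eq_mul_div, mul_div_assoc]
      _ = ENNReal.ofReal u.toReal * (ENNReal.ofReal (u.toReal ^ (q-1)) * ENNReal.ofReal (q / (1-q))) := by
          rw [ENNReal.ofReal_toReal hu]
          congr 1
          rw [ENNReal.ofReal_mul (Real.rpow_nonneg ha0.le _)]
          congr 2
          rw [ha, ← Real.rpow_mul hur.le]
          congr 1
          field_simp
          ring
      _ ≤ u ^ q * ENNReal.ofReal (q / (1-q)) := by
          rw [← mul_assoc, ← ENNReal.ofReal_mul hur.le]
          have : u.toReal * u.toReal ^ (q-1) = u.toReal ^ q := by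
            nth_rewrite 1 [← Real.rpow_one u.toReal]
            rw [← Real.rpow_add hur]; norm_num
          rw [this, ← ENNReal.ofReal_rpow_of_pos hur, ENNReal.ofReal_toReal hu]
  calc _ ≤ u ^ q + u ^ q * ENNReal.ofReal (q / (1-q)) := add_le_add term1 term2
    _ = u ^ q * ENNReal.ofReal (1 + q / (1-q)) := by
        rw [ENNReal.ofReal_add zero_le_one (by positivity), mul_add, ENNReal.ofReal_one, mul_one]
    _ = (ENNReal.ofReal (1-q))⁻¹ * u ^ q := by
        rw [mul_comm]
        congr 1
        rw [← ENNReal.ofReal_inv_of_pos h1q]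
        congr 1
        field_simp
        ring

/-- abstract form of the second Corollary of Lemma 3.28.1 of the paper.
If `X`, `C` are `[0,∞]`-valued random variables and `N > 0` is a constant such that
`P(X ≥ δ) ≤ P(C ≥ ε) + (N/δ)·E[min(ε, C)]` for all `ε, δ > 0`, then for every `q ∈ (0,1)`
one has `E[X^q] ≤ N′ · E[C^q]` with `N′ = 1 + N/(1−q)`, a constant depending only on `N`
and `q`. -/
theorem moment_estimate_of_tail_estimate
    {Ω : Type*} {m0 : MeasurableSpace Ω} (P : Measure Ω) [IsProbabilityMeasure P]
    (X C : Ω → ℝ≥0∞) (hX : Measurable X) (hC : Measurable C)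
    (N : ℝ≥0∞) (hN : 0 < N)
    (h : ∀ ε δ : ℝ≥0, 0 < ε → 0 < δ →
      P {ω | (δ : ℝ≥0∞) ≤ X ω} ≤
        P {ω | (ε : ℝ≥0∞) ≤ C ω} + (N / δ) * ∫⁻ ω, min (ε : ℝ≥0∞) (C ω) ∂P)
    (q : ℝ) (hq0 : 0 < q) (hq1 : q < 1) :
    ∫⁻ ω, X ω ^ q ∂P ≤ (1 + N / ENNReal.ofReal (1 - q)) * ∫⁻ ω, C ω ^ q ∂P := by
  have h1q : (0:ℝ) < 1 - q := by linarith
  set φ : ℝ → ℝ≥0∞ := fun t => ENNReal.ofReal (t ^ (1/q)) with hφ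
  have hφ_mble : Measurable φ :=
    ENNReal.measurable_ofReal.comp (measurable_id.pow_const (1/q))
  have hφ_pos : ∀ t : ℝ, 0 < t → 0 < t ^ (1/q) := fun t ht => Real.rpow_pos_of_pos ht _
  -- key iff
  have hiff : ∀ t : ℝ, 0 < t → ∀ x : ℝ≥0∞, (ENNReal.ofReal t < x ^ q ↔ φ t < x) := by
    intro t ht x
    rw [hφ]
    simp only
    rw [← ENNReal.ofReal_rpow_of_pos ht,
      ← ENNReal.rpow_lt_rpow_iff (show (0:ℝ) < 1/q from by positivity) (x := ENNReal.ofReal t),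
      ← ENNReal.rpow_mul x q (1/q), mul_one_div, div_self hq0.ne', ENNReal.rpow_one]
  -- monotone/antitone auxiliary measurable functions
  have hant : Antitone (fun u : ℝ≥0∞ => P {ω | u ≤ C ω}) :=
    fun u v huv => measure_mono fun ω hω => le_trans huv hω
  have hmono : Monotone (fun u : ℝ≥0∞ => ∫⁻ ω, min u (C ω) ∂P) :=
    fun u v huv => lintegral_mono fun ω => min_le_min huv le_rfl
  have hA_mble : Measurable fun t : ℝ => P {ω | φ t ≤ C ω} :=
    hant.measurable.comp hφ_mble
  -- Step 1: layer cake and tail bound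
  have step1 : ∫⁻ ω, X ω ^ q ∂P ≤
      ∫⁻ t in Ioi (0:ℝ), (P {ω | φ t ≤ C ω} + N * (φ t)⁻¹ * ∫⁻ ω, min (φ t) (C ω) ∂P) := by
    rw [layercake_ennreal P _ (hX.pow_const q)]
    refine setLIntegral_mono' measurableSet_Ioi fun t ht => ?_
    rw [mem_Ioi] at ht
    have hδpos : 0 < (t ^ (1/q)).toNNReal := Real.toNNReal_pos.mpr (hφ_pos t ht)
    have hδcoe : (((t ^ (1/q)).toNNReal : ℝ≥0) : ℝ≥0∞) = φ t := rfl
    calc P {ω | ENNReal.ofReal t < X ω ^ q}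
        ≤ P {ω | (((t ^ (1/q)).toNNReal : ℝ≥0) : ℝ≥0∞) ≤ X ω} := by
          refine measure_mono fun ω hω => ?_
          rw [mem_setOf_eq] at hω ⊢
          rw [hδcoe]
          exact le_of_lt ((hiff t ht (X ω)).mp hω)
      _ ≤ P {ω | (((t ^ (1/q)).toNNReal : ℝ≥0) : ℝ≥0∞) ≤ C ω}
            + (N / ((t ^ (1/q)).toNNReal : ℝ≥0∞)) * ∫⁻ ω, min (((t ^ (1/q)).toNNReal : ℝ≥0) : ℝ≥0∞) (C ω) ∂P :=
          h _ _ hδpos hδpos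
      _ = P {ω | φ t ≤ C ω} + N * (φ t)⁻¹ * ∫⁻ ω, min (φ t) (C ω) ∂P := by
          rw [hδcoe, div_eq_mul_inv]
  -- split the sum
  have hB_mble : Measurable fun t : ℝ => N * (φ t)⁻¹ * ∫⁻ ω, min (φ t) (C ω) ∂P :=
    ((measurable_const.mul hφ_mble.inv).mul (hmono.measurable.comp hφ_mble))
  rw [lintegral_add_right _ hB_mble] at step1
  -- A term
  have hA : ∫⁻ t in Ioi (0:ℝ), P {ω | φ t ≤ C ω} = ∫⁻ ω, C ω ^ q ∂P := by
    have hD : {u : ℝ≥0∞ | P {ω | u ≤ C ω} ≠ P {ω | u < C ω}}.Countable :=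
      countable_meas_le_ne_meas_lt P C
    have hS : {t : ℝ | P {ω | φ t ≤ C ω} ≠ P {ω | φ t < C ω}} ∩ Ioi 0 ⊆
        (fun u : ℝ≥0∞ => u.toReal ^ q) '' {u : ℝ≥0∞ | P {ω | u ≤ C ω} ≠ P {ω | u < C ω}} := by
      rintro t ⟨ht1, ht2⟩
      rw [mem_Ioi] at ht2
      refine ⟨φ t, ht1, ?_⟩
      rw [hφ]
      simp only
      rw [ENNReal.toReal_ofReal (hφ_pos t ht2).le, ← Real.rpow_mul ht2.le,
        one_div_mul_cancel hq0.ne', Real.rpow_one]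
    have hS0 : volume ({t : ℝ | P {ω | φ t ≤ C ω} ≠ P {ω | φ t < C ω}} ∩ Ioi 0) = 0 :=
      Set.Countable.measure_zero ((hD.image _).mono hS) _
    calc ∫⁻ t in Ioi (0:ℝ), P {ω | φ t ≤ C ω}
        = ∫⁻ t in Ioi (0:ℝ), P {ω | φ t < C ω} := by
          refine lintegral_congr_ae ?_
          have h1 : ∀ᵐ t ∂(volume.restrict (Ioi (0:ℝ))),
              t ∉ {t : ℝ | P {ω | φ t ≤ C ω} ≠ P {ω | φ t < C ω}} ∩ Ioi 0 :=
            ae_restrict_of_ae (measure_eq_zero_iff_ae_notMem.mp hS0)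
          filter_upwards [h1, ae_restrict_mem measurableSet_Ioi] with t ht1 ht2
          by_contra hne
          exact ht1 ⟨hne, ht2⟩
      _ = ∫⁻ t in Ioi (0:ℝ), P {ω | ENNReal.ofReal t < C ω ^ q} := by
          refine setLIntegral_congr_fun measurableSet_Ioi (fun t ht => ?_)
          rw [mem_Ioi] at ht
          congr 1
          ext ω
          simp only [mem_setOf_eq]
          exact (hiff t ht (C ω)).symm
      _ = ∫⁻ ω, C ω ^ q ∂P := (layercake_ennreal P _ (hC.pow_const q)).symm
  -- B term
  have hB : ∫⁻ t in Ioi (0:ℝ), N * (φ t)⁻¹ * ∫⁻ ω, min (φ t) (C ω) ∂P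
      ≤ (N / ENNReal.ofReal (1 - q)) * ∫⁻ ω, C ω ^ q ∂P := by
    have huncurry : Measurable (Function.uncurry fun (t : ℝ) (ω : Ω) => (φ t)⁻¹ * min (φ t) (C ω)) := by
      apply Measurable.mul
      · exact (hφ_mble.comp measurable_fst).inv
      · exact (hφ_mble.comp measurable_fst).min (hC.comp measurable_snd)
    calc ∫⁻ t in Ioi (0:ℝ), N * (φ t)⁻¹ * ∫⁻ ω, min (φ t) (C ω) ∂P
        = N * ∫⁻ t in Ioi (0:ℝ), (φ t)⁻¹ * ∫⁻ ω, min (φ t) (C ω) ∂P := by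
          simp_rw [mul_assoc]
          have hm : Measurable fun t : ℝ => (φ t)⁻¹ * ∫⁻ ω, min (φ t) (C ω) ∂P :=
            hφ_mble.inv.mul (hmono.measurable.comp hφ_mble)
          rw [lintegral_const_mul _ hm]
      _ = N * ∫⁻ t in Ioi (0:ℝ), ∫⁻ ω, (φ t)⁻¹ * min (φ t) (C ω) ∂P := by
          congr 1
          refine setLIntegral_congr_fun measurableSet_Ioi (fun t ht => ?_)
          rw [mem_Ioi] at ht
          rw [lintegral_const_mul _ (measurable_const.min hC)]
      _ = N * ∫⁻ ω, (∫⁻ t in Ioi (0:ℝ), (φ t)⁻¹ * min (φ t) (C ω)) ∂P := by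
          rw [lintegral_lintegral_swap huncurry.aemeasurable]
      _ ≤ N * ∫⁻ ω, (ENNReal.ofReal (1-q))⁻¹ * C ω ^ q ∂P := by
          exact mul_le_mul_right (lintegral_mono fun ω => inner_bound hq0 hq1 (C ω)) N
      _ = (N / ENNReal.ofReal (1 - q)) * ∫⁻ ω, C ω ^ q ∂P := by
          rw [lintegral_const_mul _ (hC.pow_const q), div_eq_mul_inv, mul_assoc]
  calc ∫⁻ ω, X ω ^ q ∂P ≤ _ := step1
    _ ≤ ∫⁻ ω, C ω ^ q ∂P + (N / ENNReal.ofReal (1 - q)) * ∫⁻ ω, C ω ^ q ∂P := by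
        rw [hA]; exact add_le_add_right hB _
    _ = (1 + N / ENNReal.ofReal (1 - q)) * ∫⁻ ω, C ω ^ q ∂P := by
        rw [add_mul, one_mul]
end
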